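/- Let K ∈ ℕ and let {f_α : α ∈ {0,1}^K} be probability densities on ℝ^d such that for some γ > 0, h²(f_α, f_β) ≥ γ·‖α-β‖₀ for all α, β, and for some C ∈ (0,1), h²(f_α, f_β) ≤ C/n whenever ‖α-β‖₀ = 1. Then for any estimator f̃_n based on an i.i.d. sample of size n, sup_α E_{f_α}[h²(f̃_n, f_α)] ≥ (K/8)·(1 - C^{1/2})·γ. -/

import Mathlib

set_option linter.unusedSectionVars false
set_option linter.unusedVariables false

open MeasureTheory Real

section aux
variable {X : Type*} [MeasurableSpace X] {ν : Measure X}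

lemma integrable_sq_sub' {a b : X → ℝ} (ha : AEStronglyMeasurable a ν)
    (hb : AEStronglyMeasurable b ν)
    (ha2 : Integrable (fun x => a x ^ 2) ν) (hb2 : Integrable (fun x => b x ^ 2) ν) :
    Integrable (fun x => (a x - b x) ^ 2) ν := by
  refine Integrable.mono' ((ha2.add hb2).const_mul 2) ?_ ?_
  · exact ((ha.sub hb).mul (ha.sub hb)).congr (by filter_upwards with x; simp [Pi.sub_apply]; ring)
  · filter_upwards with x
    simp only [Pi.add_apply]
    rw [Real.norm_eq_abs, abs_of_nonneg (sq_nonneg _)]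
    nlinarith [sq_nonneg (a x + b x)]

lemma integrable_mul_of_sq {a b : X → ℝ} (ha : AEStronglyMeasurable a ν)
    (hb : AEStronglyMeasurable b ν)
    (ha2 : Integrable (fun x => a x ^ 2) ν) (hb2 : Integrable (fun x => b x ^ 2) ν) :
    Integrable (fun x => a x * b x) ν := by
  refine Integrable.mono' (((ha2.add hb2)).const_mul (1/2)) (ha.mul hb) ?_
  filter_upwards with x
  simp only [Pi.add_apply]
  rw [Real.norm_eq_abs, abs_mul]
  nlinarith [sq_nonneg (|a x| - |b x|), sq_abs (a x), sq_abs (b x), abs_nonneg (a x), abs_nonneg (b x)]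

/-- Cauchy-Schwarz for integrals of nonneg functions. -/
lemma integral_mul_le_sqrt_sqrt {a b : X → ℝ} (ha : AEStronglyMeasurable a ν)
    (hb : AEStronglyMeasurable b ν) (ha0 : ∀ x, 0 ≤ a x) (hb0 : ∀ x, 0 ≤ b x)
    (ha2 : Integrable (fun x => a x ^ 2) ν) (hb2 : Integrable (fun x => b x ^ 2) ν) :
    ∫ x, a x * b x ∂ν ≤ Real.sqrt (∫ x, a x ^ 2 ∂ν) * Real.sqrt (∫ x, b x ^ 2 ∂ν) := by
  have hpq : Real.HolderConjugate 2 2 := Real.holderConjugate_iff.mpr ⟨one_lt_two, by norm_num⟩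
  have hma : MemLp a (ENNReal.ofReal 2) ν := by
    rw [show ENNReal.ofReal 2 = 2 by norm_num]
    exact (memLp_two_iff_integrable_sq ha).mpr ha2
  have hmb : MemLp b (ENNReal.ofReal 2) ν := by
    rw [show ENNReal.ofReal 2 = 2 by norm_num]
    exact (memLp_two_iff_integrable_sq hb).mpr hb2
  have h := integral_mul_le_Lp_mul_Lq_of_nonneg hpq
    (Filter.Eventually.of_forall ha0) (Filter.Eventually.of_forall hb0) hma hmb
  simp only [Real.rpow_two] at h
  refine h.trans (le_of_eq ?_)
  rw [Real.sqrt_eq_rpow, Real.sqrt_eq_rpow]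

end aux

section aux2
variable {X : Type*} [MeasurableSpace X] {ν : Measure X}

/-- integrability of √u·√v -/
lemma integrable_sqrt_mul_sqrt {u v : X → ℝ} (hu : AEStronglyMeasurable u ν)
    (hv : AEStronglyMeasurable v ν) (hui : Integrable u ν) (hvi : Integrable v ν) :
    Integrable (fun x => Real.sqrt (u x) * Real.sqrt (v x)) ν := by
  refine Integrable.mono' ((hui.abs.add hvi.abs).const_mul (1/2))
    ((Real.continuous_sqrt.comp_aestronglyMeasurable hu).mul (Real.continuous_sqrt.comp_aestronglyMeasurable hv)) ?_
  filter_upwards with x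
  simp only [Pi.add_apply]
  rw [Real.norm_eq_abs, abs_mul, abs_of_nonneg (Real.sqrt_nonneg _),
    abs_of_nonneg (Real.sqrt_nonneg _)]
  nlinarith [sq_nonneg (Real.sqrt (u x) - Real.sqrt (v x)), Real.sq_sqrt (abs_nonneg (u x)),
    Real.sq_sqrt (abs_nonneg (v x)), Real.sqrt_le_sqrt (le_abs_self (u x)),
    Real.sqrt_le_sqrt (le_abs_self (v x)), Real.sqrt_nonneg (u x), Real.sqrt_nonneg (v x)]

lemma integrable_sqrt_sub_sq {u v : X → ℝ} (hu : AEStronglyMeasurable u ν)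
    (hv : AEStronglyMeasurable v ν) (hu0 : ∀ x, 0 ≤ u x) (hv0 : ∀ x, 0 ≤ v x)
    (hui : Integrable u ν) (hvi : Integrable v ν) :
    Integrable (fun x => (Real.sqrt (u x) - Real.sqrt (v x)) ^ 2) ν := by
  have : (fun x => (Real.sqrt (u x) - Real.sqrt (v x)) ^ 2)
      = fun x => u x + v x - 2 * (Real.sqrt (u x) * Real.sqrt (v x)) := by
    funext x
    rw [sub_sq, Real.sq_sqrt (hu0 x), Real.sq_sqrt (hv0 x)]; ring
  rw [this]
  exact (hui.add hvi).sub ((integrable_sqrt_mul_sqrt hu hv hui hvi).const_mul 2)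

/-- Hellinger expansion. -/
lemma hellinger_expand {u v : X → ℝ} (hu : AEStronglyMeasurable u ν)
    (hv : AEStronglyMeasurable v ν) (hu0 : ∀ x, 0 ≤ u x) (hv0 : ∀ x, 0 ≤ v x)
    (hui : Integrable u ν) (hvi : Integrable v ν) :
    ∫ x, (Real.sqrt (u x) - Real.sqrt (v x)) ^ 2 ∂ν
      = ∫ x, u x ∂ν + ∫ x, v x ∂ν - 2 * ∫ x, Real.sqrt (u x) * Real.sqrt (v x) ∂ν := by
  have : (fun x => (Real.sqrt (u x) - Real.sqrt (v x)) ^ 2)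
      = fun x => u x + v x - 2 * (Real.sqrt (u x) * Real.sqrt (v x)) := by
    funext x
    rw [sub_sq, Real.sq_sqrt (hu0 x), Real.sq_sqrt (hv0 x)]; ring
  have hadd : Integrable (fun x => u x + v x) ν := hui.add hvi
  rw [this, integral_sub hadd ((integrable_sqrt_mul_sqrt hu hv hui hvi).const_mul 2),
    integral_add hui hvi, MeasureTheory.integral_const_mul]

end aux2

section aux3
variable {X : Type*} [MeasurableSpace X] {ν : Measure X}

/-- L² triangle inequality in squared form. -/
lemma sq_dist_triangle {a b c : X → ℝ} (ha : AEStronglyMeasurable a ν)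
    (hb : AEStronglyMeasurable b ν) (hc : AEStronglyMeasurable c ν)
    (ha2 : Integrable (fun x => a x ^ 2) ν) (hb2 : Integrable (fun x => b x ^ 2) ν)
    (hc2 : Integrable (fun x => c x ^ 2) ν) :
    ∫ x, (a x - c x) ^ 2 ∂ν
      ≤ (Real.sqrt (∫ x, (a x - b x) ^ 2 ∂ν) + Real.sqrt (∫ x, (b x - c x) ^ 2 ∂ν)) ^ 2 := by
  set P := ∫ x, (a x - b x) ^ 2 ∂ν with hP
  set Q := ∫ x, (b x - c x) ^ 2 ∂ν with hQ
  have hP0 : 0 ≤ P := integral_nonneg fun x => sq_nonneg _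
  have hQ0 : 0 ≤ Q := integral_nonneg fun x => sq_nonneg _
  have hab : AEStronglyMeasurable (fun x => a x - b x) ν := ha.sub hb
  have hbc : AEStronglyMeasurable (fun x => b x - c x) ν := hb.sub hc
  have habA : AEStronglyMeasurable (fun x => |a x - b x|) ν :=
    continuous_abs.comp_aestronglyMeasurable hab
  have hbcA : AEStronglyMeasurable (fun x => |b x - c x|) ν :=
    continuous_abs.comp_aestronglyMeasurable hbc
  have hiab : Integrable (fun x => (a x - b x) ^ 2) ν := integrable_sq_sub' ha hb ha2 hb2
  have hibc : Integrable (fun x => (b x - c x) ^ 2) ν := integrable_sq_sub' hb hc hb2 hc2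
  have hicross : Integrable (fun x => (a x - b x) * (b x - c x)) ν :=
    integrable_mul_of_sq hab hbc hiab hibc
  have expand : ∫ x, (a x - c x) ^ 2 ∂ν
      = P + Q + 2 * ∫ x, (a x - b x) * (b x - c x) ∂ν := by
    have : (fun x => (a x - c x) ^ 2)
        = fun x => (a x - b x) ^ 2 + (b x - c x) ^ 2 + 2 * ((a x - b x) * (b x - c x)) := by
      funext x; ring
    rw [this]
    have h1 : Integrable (fun x => (a x - b x) ^ 2 + (b x - c x) ^ 2) ν := hiab.add hibc
    rw [integral_add h1 (hicross.const_mul 2), integral_add hiab hibc,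
      MeasureTheory.integral_const_mul]
  have cross_le : ∫ x, (a x - b x) * (b x - c x) ∂ν ≤ Real.sqrt P * Real.sqrt Q := by
    have habs : ∫ x, (a x - b x) * (b x - c x) ∂ν ≤ ∫ x, |a x - b x| * |b x - c x| ∂ν := by
      refine integral_mono hicross ?_ fun x => ?_
      · exact (integrable_mul_of_sq habA hbcA (by simpa [sq_abs] using hiab)
          (by simpa [sq_abs] using hibc))
      · rw [← abs_mul]; exact le_abs_self _
    refine habs.trans ?_
    have := integral_mul_le_sqrt_sqrt (a := fun x => |a x - b x|) (b := fun x => |b x - c x|)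
      habA hbcA (fun x => abs_nonneg _) (fun x => abs_nonneg _)
      (by simpa [sq_abs] using hiab) (by simpa [sq_abs] using hibc)
    simpa [sq_abs] using this
  have sqsq : (Real.sqrt P + Real.sqrt Q) ^ 2 = P + Q + 2 * (Real.sqrt P * Real.sqrt Q) := by
    rw [add_sq, Real.sq_sqrt hP0, Real.sq_sqrt hQ0]; ring
  rw [expand, sqsq]
  linarith

end aux3

section aux4
variable {X : Type*} [MeasureSpace X] [SigmaFinite (volume : Measure X)]

lemma prob_withDensity {u : X → ℝ} (hu0 : ∀ x, 0 ≤ u x)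
    (hui : Integrable u) (huint : ∫ x, u x = 1) :
    IsProbabilityMeasure (volume.withDensity fun x => ENNReal.ofReal (u x)) := by
  constructor
  rw [withDensity_apply _ MeasurableSet.univ, Measure.restrict_univ,
    ← ofReal_integral_eq_lintegral_ofReal hui (Filter.Eventually.of_forall hu0), huint,
    ENNReal.ofReal_one]

lemma pi_withDensity_eq {n : ℕ} {u : X → ℝ} (hu : Measurable u) (hu0 : ∀ x, 0 ≤ u x)
    (hui : Integrable u) (huint : ∫ x, u x = 1) :
    Measure.pi (fun _ : Fin n => volume.withDensity fun x => ENNReal.ofReal (u x))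
      = (volume : Measure (Fin n → X)).withDensity
          fun ω => ENNReal.ofReal (∏ i, u (ω i)) := by
  haveI : IsProbabilityMeasure (volume.withDensity fun x => ENNReal.ofReal (u x)) :=
    prob_withDensity hu0 hui huint
  haveI : ∀ i : Fin n, SigmaFinite
      ((fun _ : Fin n => volume.withDensity fun x => ENNReal.ofReal (u x)) i) :=
    fun _ => inferInstance
  refine Measure.pi_eq fun s hs => ?_
  rw [withDensity_apply _ (MeasurableSet.univ_pi hs)]
  set F : Fin n → X → ℝ := fun i => (s i).indicator u with hF
  have hFi : ∀ i, Integrable (F i) := fun i => hui.indicator (hs i)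
  have hF0 : ∀ i x, 0 ≤ F i x := fun i x => Set.indicator_nonneg (fun y _ => hu0 y) x
  have step1 : ∫⁻ ω in Set.univ.pi s, ENNReal.ofReal (∏ i, u (ω i))
      ∂(volume : Measure (Fin n → X))
      = ∫⁻ ω, ENNReal.ofReal (∏ i, F i (ω i)) ∂(volume : Measure (Fin n → X)) := by
    rw [← lintegral_indicator (MeasurableSet.univ_pi hs)]
    congr 1
    funext ω
    by_cases hω : ω ∈ Set.univ.pi s
    · rw [Set.indicator_of_mem hω]
      congr 1
      exact Finset.prod_congr rfl fun i _ =>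
        (Set.indicator_of_mem (hω i (Set.mem_univ i)) u).symm
    · rw [Set.indicator_of_notMem hω]
      rw [Set.mem_univ_pi] at hω; push_neg at hω
      obtain ⟨i, hi⟩ := hω
      rw [Finset.prod_eq_zero (Finset.mem_univ i) (Set.indicator_of_notMem hi u),
        ENNReal.ofReal_zero]
  have hGi : Integrable (fun ω : Fin n → X => ∏ i, F i (ω i)) := Integrable.fintype_prod hFi
  have step2 : ∫⁻ ω, ENNReal.ofReal (∏ i, F i (ω i)) ∂(volume : Measure (Fin n → X))
      = ENNReal.ofReal (∫ ω : Fin n → X, ∏ i, F i (ω i)) :=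
    (ofReal_integral_eq_lintegral_ofReal hGi
      (Filter.Eventually.of_forall fun ω => Finset.prod_nonneg fun i _ => hF0 i _)).symm
  have step3 : (∫ ω : Fin n → X, ∏ i, F i (ω i)) = ∏ i, ∫ x, F i x :=
    integral_fintype_prod_eq_prod (ι := Fin n) (fun i => F i)
  have step4 : ∀ i, ENNReal.ofReal (∫ x, F i x)
      = (volume.withDensity fun x => ENNReal.ofReal (u x)) (s i) := by
    intro i
    rw [withDensity_apply _ (hs i)]
    have : ∫ x, F i x = ∫ x in s i, u x := integral_indicator (hs i)
    rw [this, ofReal_integral_eq_lintegral_ofReal (hui.restrict)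
      (Filter.Eventually.of_forall fun x => hu0 x)]
  rw [step1, step2, step3, ENNReal.ofReal_prod_of_nonneg
    (fun i _ => integral_nonneg fun x => hF0 i x)]
  exact Finset.prod_congr rfl fun i _ => step4 i

end aux4

section aux5
variable {X : Type*} [MeasureSpace X] [SigmaFinite (volume : Measure X)]

lemma key_testing {n : ℕ} (hn : 0 < n)
    {u v : X → ℝ} (hu : Measurable u) (hv : Measurable v)
    (hu0 : ∀ x, 0 ≤ u x) (hv0 : ∀ x, 0 ≤ v x)
    (hui : Integrable u) (hvi : Integrable v)
    (huint : ∫ x, u x = 1) (hvint : ∫ x, v x = 1)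
    {C : ℝ} (hC0 : 0 < C) (hC1 : C < 1)
    (hH : ∫ x, (Real.sqrt (u x) - Real.sqrt (v x)) ^ 2 ≤ C / n)
    {S : Set (Fin n → X)} (hS : MeasurableSet S) :
    1 - Real.sqrt C ≤
      ((Measure.pi fun _ : Fin n => volume.withDensity fun x => ENNReal.ofReal (u x)) S).toReal
      + ((Measure.pi fun _ : Fin n => volume.withDensity fun x => ENNReal.ofReal (v x)) Sᶜ).toReal
    := by
  -- the one-dimensional affinity
  set ρ := ∫ x, Real.sqrt (u x) * Real.sqrt (v x) with hρ
  have hexp := hellinger_expand hu.aestronglyMeasurable hv.aestronglyMeasurable hu0 hv0 hui hvi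
  rw [huint, hvint] at hexp
  have hρ0 : 0 ≤ ρ := integral_nonneg fun x => mul_nonneg (Real.sqrt_nonneg _) (Real.sqrt_nonneg _)
  have hH0 : 0 ≤ ∫ x, (Real.sqrt (u x) - Real.sqrt (v x)) ^ 2 :=
    integral_nonneg fun x => sq_nonneg _
  have hρ1 : ρ ≤ 1 := by rw [hρ]; nlinarith
  have hρlb : 1 - C / (2 * n) ≤ ρ := by
    have : (2:ℝ) - 2 * ρ ≤ C / n := by rw [hρ]; linarith
    have hn' : (0:ℝ) < n := by exact_mod_cast hn
    rw [div_mul_eq_div_div_swap]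
    linarith [this]
  -- Bernoulli
  have hfrac : (0:ℝ) ≤ 1 - C / (2 * n) := by
    have hn' : (1:ℝ) ≤ n := by exact_mod_cast hn
    have : C / (2 * n) ≤ C / 2 := by
      apply div_le_div_of_nonneg_left hC0.le (by norm_num) (by nlinarith)
    linarith
  have hρn : 1 - C / 2 ≤ ρ ^ n := by
    have hb := one_add_mul_le_pow (a := -(C / (2 * n))) (by nlinarith [hfrac]) n
    have hn' : (0:ℝ) < n := by exact_mod_cast hn
    have e : 1 + (n:ℝ) * -(C / (2 * n)) = 1 - C / 2 := by field_simp; ring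
    rw [e] at hb
    calc 1 - C / 2 ≤ (1 + -(C / (2 * n))) ^ n := hb
      _ = (1 - C / (2 * n)) ^ n := by ring_nf
      _ ≤ ρ ^ n := pow_le_pow_left₀ hfrac hρlb n
  have hρn1 : ρ ^ n ≤ 1 := pow_le_one₀ hρ0 hρ1
  -- product densities
  set U : (Fin n → X) → ℝ := fun ω => ∏ i, u (ω i) with hU
  set V : (Fin n → X) → ℝ := fun ω => ∏ i, v (ω i) with hV
  set SU : (Fin n → X) → ℝ := fun ω => ∏ i, Real.sqrt (u (ω i)) with hSU
  set SV : (Fin n → X) → ℝ := fun ω => ∏ i, Real.sqrt (v (ω i)) with hSV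
  have hUm : Measurable U := Finset.measurable_prod _ fun i _ => hu.comp (measurable_pi_apply i)
  have hVm : Measurable V := Finset.measurable_prod _ fun i _ => hv.comp (measurable_pi_apply i)
  have hSUm : Measurable SU :=
    Finset.measurable_prod _ fun i _ => (hu.comp (measurable_pi_apply i)).sqrt
  have hSVm : Measurable SV :=
    Finset.measurable_prod _ fun i _ => (hv.comp (measurable_pi_apply i)).sqrt
  have hU0 : ∀ ω, 0 ≤ U ω := fun ω => Finset.prod_nonneg fun i _ => hu0 _
  have hV0 : ∀ ω, 0 ≤ V ω := fun ω => Finset.prod_nonneg fun i _ => hv0 _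
  have hSU0 : ∀ ω, 0 ≤ SU ω := fun ω => Finset.prod_nonneg fun i _ => Real.sqrt_nonneg _
  have hSV0 : ∀ ω, 0 ≤ SV ω := fun ω => Finset.prod_nonneg fun i _ => Real.sqrt_nonneg _
  have hUi : Integrable U := Integrable.fintype_prod fun _ => hui
  have hVi : Integrable V := Integrable.fintype_prod fun _ => hvi
  have hSUsq : ∀ ω, SU ω ^ 2 = U ω := by
    intro ω; rw [hSU, ← Finset.prod_pow]
    exact Finset.prod_congr rfl fun i _ => Real.sq_sqrt (hu0 _)
  have hSVsq : ∀ ω, SV ω ^ 2 = V ω := by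
    intro ω; rw [hSV, ← Finset.prod_pow]
    exact Finset.prod_congr rfl fun i _ => Real.sq_sqrt (hv0 _)
  have hSUSV : ∀ ω, SU ω * SV ω = ∏ i, Real.sqrt (u (ω i)) * Real.sqrt (v (ω i)) := by
    intro ω; rw [hSU, hSV, Finset.prod_mul_distrib]
  have hSUSVi : Integrable (fun ω => SU ω * SV ω) := by
    have : Integrable (fun ω : Fin n → X => ∏ i, Real.sqrt (u (ω i)) * Real.sqrt (v (ω i))) :=
      Integrable.fintype_prod fun _ =>
        integrable_sqrt_mul_sqrt hu.aestronglyMeasurable hv.aestronglyMeasurable hui hvi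
    exact this.congr (Filter.Eventually.of_forall fun ω => (hSUSV ω).symm)
  have hUint : ∫ ω, U ω = 1 := by
    rw [hU, volume_pi, integral_fintype_prod_eq_pow (ι := Fin n) u, huint, one_pow]
  have hVint : ∫ ω, V ω = 1 := by
    rw [hV, volume_pi, integral_fintype_prod_eq_pow (ι := Fin n) v, hvint, one_pow]
  have hSUSVint : ∫ ω, SU ω * SV ω = ρ ^ n := by
    have : ∫ ω, SU ω * SV ω = ∫ ω : Fin n → X, ∏ i, Real.sqrt (u (ω i)) * Real.sqrt (v (ω i)) :=
      integral_congr_ae (Filter.Eventually.of_forall fun ω => hSUSV ω)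
    rw [this, volume_pi, integral_fintype_prod_eq_pow (ι := Fin n) (fun x => Real.sqrt (u x) * Real.sqrt (v x)),
      ← hρ, Fintype.card_fin]
  -- integrability of squares
  have hUisq : Integrable (fun ω => SU ω ^ 2) :=
    hUi.congr (Filter.Eventually.of_forall fun ω => (hSUsq ω).symm)
  have hVisq : Integrable (fun ω => SV ω ^ 2) :=
    hVi.congr (Filter.Eventually.of_forall fun ω => (hSVsq ω).symm)
  -- expansions on product space
  have hdiff_sq : ∀ ω, (SV ω - SU ω) ^ 2 = V ω + U ω - 2 * (SU ω * SV ω) := by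
    intro ω; rw [sub_sq, hSVsq, hSUsq]; ring
  have hsum_sq : ∀ ω, (SV ω + SU ω) ^ 2 = V ω + U ω + 2 * (SU ω * SV ω) := by
    intro ω; rw [add_sq, hSVsq, hSUsq]; ring
  have hdiffi : Integrable (fun ω => (SV ω - SU ω) ^ 2) := by
    refine ((hVi.add hUi).sub (hSUSVi.const_mul 2)).congr
      (Filter.Eventually.of_forall fun ω => ?_)
    simp only [Pi.add_apply, Pi.sub_apply]
    rw [hdiff_sq ω]
  have hsumi : Integrable (fun ω => (SV ω + SU ω) ^ 2) := by
    refine ((hVi.add hUi).add (hSUSVi.const_mul 2)).congr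
      (Filter.Eventually.of_forall fun ω => ?_)
    simp only [Pi.add_apply]
    rw [hsum_sq ω]
  have hdiff_int : ∫ ω, (SV ω - SU ω) ^ 2 = 2 - 2 * ρ ^ n := by
    have : (fun ω => (SV ω - SU ω) ^ 2) = fun ω => V ω + U ω - 2 * (SU ω * SV ω) :=
      funext hdiff_sq
    have hVUadd : Integrable (fun ω => V ω + U ω) := hVi.add hUi
    rw [this, integral_sub hVUadd (hSUSVi.const_mul 2), integral_add hVi hUi,
      MeasureTheory.integral_const_mul, hVint, hUint, hSUSVint]
    ring
  have hsum_int : ∫ ω, (SV ω + SU ω) ^ 2 = 2 + 2 * ρ ^ n := by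
    have : (fun ω => (SV ω + SU ω) ^ 2) = fun ω => V ω + U ω + 2 * (SU ω * SV ω) :=
      funext hsum_sq
    have hVUadd : Integrable (fun ω => V ω + U ω) := hVi.add hUi
    rw [this, integral_add hVUadd (hSUSVi.const_mul 2), integral_add hVi hUi,
      MeasureTheory.integral_const_mul, hVint, hUint, hSUSVint]
    ring
  -- L¹ bound
  have habsVU : ∀ ω, |V ω - U ω| = |SV ω - SU ω| * (SV ω + SU ω) := by
    intro ω
    have : V ω - U ω = (SV ω - SU ω) * (SV ω + SU ω) := by
      rw [← hSVsq ω, ← hSUsq ω]; ring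
    rw [this, abs_mul, abs_of_nonneg (by positivity : (0:ℝ) ≤ SV ω + SU ω)]
  have hVUi : Integrable (fun ω => V ω - U ω) := hVi.sub hUi
  have hL1 : ∫ ω, |V ω - U ω| ≤ 2 * Real.sqrt C := by
    have e : ∫ ω, |V ω - U ω| = ∫ ω, |SV ω - SU ω| * (SV ω + SU ω) :=
      integral_congr_ae (Filter.Eventually.of_forall fun ω => habsVU ω)
    have hcs := integral_mul_le_sqrt_sqrt
      (a := fun ω => |SV ω - SU ω|) (b := fun ω => SV ω + SU ω)
      (continuous_abs.comp_aestronglyMeasurable (hSVm.sub hSUm).aestronglyMeasurable)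
      (hSVm.add hSUm).aestronglyMeasurable
      (fun ω => abs_nonneg _) (fun ω => by positivity)
      (by simpa [sq_abs] using hdiffi) hsumi
    simp only [sq_abs] at hcs
    rw [e]
    refine hcs.trans ?_
    rw [hdiff_int, hsum_int]
    have h1 : Real.sqrt (2 - 2 * ρ ^ n) ≤ Real.sqrt C :=
      Real.sqrt_le_sqrt (by linarith)
    have h2 : Real.sqrt (2 + 2 * ρ ^ n) ≤ 2 := by
      have h4 : (2:ℝ) + 2 * ρ ^ n ≤ 4 := by linarith
      calc Real.sqrt (2 + 2 * ρ ^ n) ≤ Real.sqrt 4 := Real.sqrt_le_sqrt h4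
        _ = 2 := by
            rw [show (4:ℝ) = 2 ^ 2 by norm_num, Real.sqrt_sq (by norm_num : (0:ℝ) ≤ 2)]
    calc Real.sqrt (2 - 2 * ρ ^ n) * Real.sqrt (2 + 2 * ρ ^ n)
        ≤ Real.sqrt C * 2 := by
          apply mul_le_mul h1 h2 (Real.sqrt_nonneg _) (Real.sqrt_nonneg _)
      _ = 2 * Real.sqrt C := by ring
  -- set difference bound
  have hsetdiff : (∫ ω in S, V ω) - ∫ ω in S, U ω ≤ Real.sqrt C := by
    have hVU0 : ∫ ω, (V ω - U ω) = 0 := by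
      rw [integral_sub hVi hUi, hVint, hUint]; ring
    have step1 : ∫ ω in S, (V ω - U ω) ≤ ∫ ω in S, (|V ω - U ω| + (V ω - U ω)) / 2 := by
      refine setIntegral_mono_on (hVUi.restrict) ?_ hS fun ω _ => by
        cases abs_cases (V ω - U ω) with
        | inl h => linarith [h.1]
        | inr h => linarith [h.1]
      exact ((hVUi.abs.add hVUi).div_const 2).restrict
    have step2 : ∫ ω in S, (|V ω - U ω| + (V ω - U ω)) / 2
        ≤ ∫ ω, (|V ω - U ω| + (V ω - U ω)) / 2 := by
      refine setIntegral_le_integral ((hVUi.abs.add hVUi).div_const 2) ?_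
      filter_upwards with ω
      have := abs_nonneg (V ω - U ω); have := le_abs_self (V ω - U ω)
      simp only [Pi.zero_apply]
      linarith [neg_abs_le (V ω - U ω)]
    have step3 : ∫ ω, (|V ω - U ω| + (V ω - U ω)) / 2
        = (∫ ω, |V ω - U ω|) / 2 := by
      rw [show (fun ω => (|V ω - U ω| + (V ω - U ω)) / 2)
          = fun ω => (|V ω - U ω|) / 2 + (V ω - U ω) / 2 from funext fun ω => by ring]
      rw [integral_add (hVUi.abs.div_const 2) (hVUi.div_const 2), integral_div, integral_div,
        hVU0]
      ring
    have e : (∫ ω in S, V ω) - ∫ ω in S, U ω = ∫ ω in S, (V ω - U ω) :=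
      (integral_sub (hVi.restrict) (hUi.restrict)).symm
    rw [e]
    calc ∫ ω in S, (V ω - U ω) ≤ (∫ ω, |V ω - U ω|) / 2 := by
          refine step1.trans (step2.trans (le_of_eq step3))
      _ ≤ Real.sqrt C := by linarith [hL1]
  -- measure identification
  have hPu : ((Measure.pi fun _ : Fin n => volume.withDensity
      fun x => ENNReal.ofReal (u x)) S).toReal = ∫ ω in S, U ω := by
    rw [pi_withDensity_eq hu hu0 hui huint, withDensity_apply _ hS,
      ← ofReal_integral_eq_lintegral_ofReal (hUi.restrict)
        (Filter.Eventually.of_forall fun ω => hU0 ω),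
      ENNReal.toReal_ofReal (setIntegral_nonneg hS fun ω _ => hU0 ω)]
  have hPv : ((Measure.pi fun _ : Fin n => volume.withDensity
      fun x => ENNReal.ofReal (v x)) Sᶜ).toReal = 1 - ∫ ω in S, V ω := by
    rw [pi_withDensity_eq hv hv0 hvi hvint, withDensity_apply _ hS.compl,
      ← ofReal_integral_eq_lintegral_ofReal (hVi.restrict)
        (Filter.Eventually.of_forall fun ω => hV0 ω),
      ENNReal.toReal_ofReal (setIntegral_nonneg hS.compl fun ω _ => hV0 ω)]
    have := integral_add_compl hS hVi
    rw [hVint] at this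
    linarith
  rw [hPu, hPv]
  linarith

end aux5

lemma exists_measurable_argmin {Ω A : Type*} [MeasurableSpace Ω] [Fintype A] [Nonempty A]
    [DecidableEq A] (H : Ω → A → ℝ) (hH : ∀ a, Measurable fun ω => H ω a) :
    ∃ sel : Ω → A, (∀ ω a, H ω (sel ω) ≤ H ω a) ∧ ∀ a, MeasurableSet {ω | sel ω = a} := by
  classical
  let e : Fin (Fintype.card A) ≃ A := (Fintype.equivFin A).symm
  let T : Ω → Finset (Fin (Fintype.card A)) :=
    fun ω => Finset.univ.filter fun i => ∀ b, H ω (e i) ≤ H ω b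
  have hTne : ∀ ω, (T ω).Nonempty := by
    intro ω
    obtain ⟨a, -, ha⟩ := Finset.exists_min_image Finset.univ (H ω) ⟨Classical.arbitrary A,
      Finset.mem_univ _⟩
    refine ⟨e.symm a, ?_⟩
    simp only [T, Finset.mem_filter, Finset.mem_univ, true_and, Equiv.apply_symm_apply]
    exact fun b => ha b (Finset.mem_univ b)
  refine ⟨fun ω => e ((T ω).min' (hTne ω)), ?_, ?_⟩
  · intro ω a
    have hmem := (T ω).min'_mem (hTne ω)
    simp only [T, Finset.mem_filter] at hmem
    exact hmem.2 a
  · intro a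
    have hset : {ω | e ((T ω).min' (hTne ω)) = a}
        = {ω | (∀ b, H ω a ≤ H ω b)} ∩ ⋂ (i : Fin (Fintype.card A)) (_ : i < e.symm a),
            {ω | ∀ b, H ω (e i) ≤ H ω b}ᶜ := by
      ext ω
      simp only [Set.mem_setOf_eq, Set.mem_inter_iff, Set.mem_iInter, Set.mem_compl_iff]
      constructor
      · intro h
        have hmem := (T ω).min'_mem (hTne ω)
        simp only [T, Finset.mem_filter] at hmem
        constructor
        · intro b; rw [← h]; exact hmem.2 b
        · intro i hi hgood
          have himem : i ∈ T ω := by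
            simp only [T, Finset.mem_filter, Finset.mem_univ, true_and]; exact hgood
          have := (T ω).min'_le i himem
          rw [show (T ω).min' (hTne ω) = e.symm a by rw [← h]; simp] at this
          exact absurd this (not_le.mpr hi)
      · rintro ⟨hgood, hmin⟩
        have hmema : e.symm a ∈ T ω := by
          simp only [T, Finset.mem_filter, Finset.mem_univ, true_and, Equiv.apply_symm_apply]
          exact hgood
        have h1 : (T ω).min' (hTne ω) ≤ e.symm a := (T ω).min'_le _ hmema
        have h2 : ¬ ((T ω).min' (hTne ω) < e.symm a) := by
          intro hlt
          have hmem := (T ω).min'_mem (hTne ω)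
          simp only [T, Finset.mem_filter, Finset.mem_univ, true_and] at hmem
          exact hmin _ hlt hmem
        have : (T ω).min' (hTne ω) = e.symm a := le_antisymm h1 (not_lt.mp h2)
        rw [this]; simp
    rw [show {ω | (fun ω => e ((T ω).min' (hTne ω))) ω = a} = {ω | e ((T ω).min' (hTne ω)) = a}
      from rfl, hset]
    refine MeasurableSet.inter ?_ ?_
    · rw [show {ω | ∀ b, H ω a ≤ H ω b} = ⋂ b, {ω | H ω a ≤ H ω b} by ext ω; simp]
      exact MeasurableSet.iInter fun b => measurableSet_le (hH a) (hH b)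
    · refine MeasurableSet.iInter fun i => MeasurableSet.iInter fun _ => ?_
      refine MeasurableSet.compl ?_
      rw [show {ω | ∀ b, H ω (e i) ≤ H ω b} = ⋂ b, {ω | H ω (e i) ≤ H ω b} by ext ω; simp]
      exact MeasurableSet.iInter fun b => measurableSet_le (hH (e i)) (hH b)

/-- Assouad's lemma for squared Hellinger loss: if `{f_α : α ∈ {0,1}^K}` are densities on
`ℝ^d` with `h²(f_α,f_β) ≥ γ‖α-β‖₀` and `h²(f_α,f_β) ≤ C/n` whenever `‖α-β‖₀ = 1`
(`C ∈ (0,1)`), then any estimator based on an i.i.d. sample of size `n` has supremum risk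
at least `(K/8)(1-√C)γ`. -/
theorem assouad_hellinger {d K n : ℕ} (hn : 0 < n)
    (f : (Fin K → Bool) → EuclideanSpace ℝ (Fin d) → ℝ)
    (hmeas : ∀ α, Measurable (f α))
    (hnonneg : ∀ α x, 0 ≤ f α x)
    (hint : ∀ α, ∫ x, f α x = 1)
    (γ : ℝ) (hγ : 0 < γ)
    (hsep : ∀ α β : Fin K → Bool,
      γ * ((Finset.univ.filter fun i => α i ≠ β i).card : ℝ) ≤
        ∫ x, (Real.sqrt (f α x) - Real.sqrt (f β x)) ^ 2)
    (C : ℝ) (hC0 : 0 < C) (hC1 : C < 1)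
    (hclose : ∀ α β : Fin K → Bool,
      (Finset.univ.filter fun i => α i ≠ β i).card = 1 →
        (∫ x, (Real.sqrt (f α x) - Real.sqrt (f β x)) ^ 2) ≤ C / n)
    (est : (Fin n → EuclideanSpace ℝ (Fin d)) → EuclideanSpace ℝ (Fin d) → ℝ)
    (hest_meas : Measurable (Function.uncurry est))
    (hest_nonneg : ∀ ω x, 0 ≤ est ω x)
    (hest_int : ∀ ω, ∫ x, est ω x = 1) :
    (K : ℝ) / 8 * (1 - Real.sqrt C) * γ ≤
      ⨆ α : Fin K → Bool,
        ∫ ω, (∫ x, (Real.sqrt (est ω x) - Real.sqrt (f α x)) ^ 2)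
          ∂(Measure.pi fun _ : Fin n =>
              volume.withDensity fun x => ENNReal.ofReal (f α x)) := by
  classical
  -- basic integrability
  have hfint : ∀ α, Integrable (f α) := by
    intro α
    by_contra h
    have := hint α
    rw [integral_undef h] at this
    norm_num at this
  have hestm : ∀ ω : Fin n → EuclideanSpace ℝ (Fin d), Measurable (est ω) := fun ω =>
    hest_meas.comp measurable_prodMk_left
  have hest_fint : ∀ ω : Fin n → EuclideanSpace ℝ (Fin d), Integrable (est ω) := by
    intro ω
    by_contra h
    have := hest_int ω
    rw [integral_undef h] at this
    norm_num at this
  -- risk integrand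
  set H : (Fin n → EuclideanSpace ℝ (Fin d)) → (Fin K → Bool) → ℝ :=
    fun ω α => ∫ x, (Real.sqrt (est ω x) - Real.sqrt (f α x)) ^ 2 with hHdef
  have hHmeas : ∀ α, Measurable fun ω => H ω α := by
    intro α
    have hF : StronglyMeasurable fun p : (Fin n → EuclideanSpace ℝ (Fin d)) × EuclideanSpace ℝ (Fin d) =>
        (Real.sqrt (Function.uncurry est p) - Real.sqrt (f α p.2)) ^ 2 :=
      ((hest_meas.sqrt.sub (((hmeas α).comp measurable_snd).sqrt)).pow_const 2).stronglyMeasurable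
    exact (hF.integral_prod_right' (ν := volume)).measurable
  have hH0 : ∀ ω α, 0 ≤ H ω α := fun ω α => integral_nonneg fun x => sq_nonneg _
  have hHsq_int : ∀ (ω : Fin n → EuclideanSpace ℝ (Fin d)) α,
      Integrable (fun x => (Real.sqrt (est ω x) - Real.sqrt (f α x)) ^ 2) :=
    fun ω α => integrable_sqrt_sub_sq (hestm ω).aestronglyMeasurable
      (hmeas α).aestronglyMeasurable (hest_nonneg ω) (hnonneg α) (hest_fint ω) (hfint α)
  have hH2 : ∀ ω α, H ω α ≤ 2 := by
    intro ω α
    have hpt : ∀ x, (Real.sqrt (est ω x) - Real.sqrt (f α x)) ^ 2 ≤ est ω x + f α x := by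
      intro x
      rw [sub_sq, Real.sq_sqrt (hest_nonneg ω x), Real.sq_sqrt (hnonneg α x)]
      nlinarith [mul_nonneg (Real.sqrt_nonneg (est ω x)) (Real.sqrt_nonneg (f α x))]
    have hadd : Integrable (fun x => est ω x + f α x) := (hest_fint ω).add (hfint α)
    have hle := integral_mono (hHsq_int ω α) hadd hpt
    have hsum : (∫ x, (est ω x + f α x)) = 2 := by
      rw [integral_add (hest_fint ω) (hfint α), hest_int ω, hint α]; norm_num
    rw [hHdef]
    dsimp only
    linarith
  -- measurable argmin selection
  obtain ⟨sel, hsel_min, hsel_meas⟩ := exists_measurable_argmin H hHmeas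
  -- triangle comparison
  have htri : ∀ (ω : Fin n → EuclideanSpace ℝ (Fin d)) (α : Fin K → Bool),
      γ * ((Finset.univ.filter fun i => sel ω i ≠ α i).card : ℝ) ≤ 4 * H ω α := by
    intro ω α
    have h1 := hsep (sel ω) α
    have hsq_f : ∀ β : Fin K → Bool, Integrable (fun x => (Real.sqrt (f β x)) ^ 2) := fun β =>
      (hfint β).congr (Filter.Eventually.of_forall fun x =>
        (Real.sq_sqrt (hnonneg β x)).symm)
    have hsq_e : Integrable (fun x => (Real.sqrt (est ω x)) ^ 2) :=
      (hest_fint ω).congr (Filter.Eventually.of_forall fun x =>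
        (Real.sq_sqrt (hest_nonneg ω x)).symm)
    have tri := sq_dist_triangle
      (a := fun x => Real.sqrt (f (sel ω) x)) (b := fun x => Real.sqrt (est ω x))
      (c := fun x => Real.sqrt (f α x))
      (hmeas (sel ω)).sqrt.aestronglyMeasurable (hestm ω).sqrt.aestronglyMeasurable
      (hmeas α).sqrt.aestronglyMeasurable (hsq_f (sel ω)) hsq_e (hsq_f α)
    have e1 : ∫ x, (Real.sqrt (f (sel ω) x) - Real.sqrt (est ω x)) ^ 2 = H ω (sel ω) := by
      rw [hHdef]
      exact integral_congr_ae (Filter.Eventually.of_forall fun x => by ring)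
    have e2 : ∫ x, (Real.sqrt (est ω x) - Real.sqrt (f α x)) ^ 2 = H ω α := rfl
    rw [e1, e2] at tri
    have hmono : Real.sqrt (H ω (sel ω)) ≤ Real.sqrt (H ω α) :=
      Real.sqrt_le_sqrt (hsel_min ω α)
    have hbound : (Real.sqrt (H ω (sel ω)) + Real.sqrt (H ω α)) ^ 2 ≤ 4 * H ω α := by
      have h4 : (Real.sqrt (H ω (sel ω)) + Real.sqrt (H ω α)) ^ 2
          ≤ (2 * Real.sqrt (H ω α)) ^ 2 := by
        have := Real.sqrt_nonneg (H ω (sel ω))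
        have := Real.sqrt_nonneg (H ω α)
        nlinarith
      have : (2 * Real.sqrt (H ω α)) ^ 2 = 4 * H ω α := by
        rw [mul_pow, Real.sq_sqrt (hH0 ω α)]; norm_num
      linarith
    exact h1.trans (tri.trans hbound)
  -- probability measures
  set P : (Fin K → Bool) → Measure (Fin n → EuclideanSpace ℝ (Fin d)) := fun α => Measure.pi fun _ : Fin n =>
    volume.withDensity fun x => ENNReal.ofReal (f α x) with hPdef
  have hPprob : ∀ α, IsProbabilityMeasure (P α) := by
    intro α
    haveI : IsProbabilityMeasure (volume.withDensity fun x => ENNReal.ofReal (f α x)) :=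
      prob_withDensity (hnonneg α) (hfint α) (hint α)
    rw [hPdef]
    infer_instance
  -- error sets
  set S : (Fin K → Bool) → Fin K → Set (Fin n → EuclideanSpace ℝ (Fin d)) := fun α j => {ω | sel ω j ≠ α j} with hSdef
  have hSmeas : ∀ α j, MeasurableSet (S α j) := by
    intro α j
    have : S α j = ⋃ (a : Fin K → Bool), ⋃ (_ : a j ≠ α j), {ω | sel ω = a} := by
      ext ω
      simp only [hSdef, Set.mem_setOf_eq, Set.mem_iUnion]
      constructor
      · intro h; exact ⟨sel ω, h, rfl⟩
      · rintro ⟨a, ha, rfl⟩; exact ha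
    rw [this]
    exact MeasurableSet.iUnion fun a => MeasurableSet.iUnion fun _ => hsel_meas a
  set t : (Fin K → Bool) → Fin K → ℝ := fun α j => ((P α) (S α j)).toReal with htdef
  -- risk of each α
  set R : (Fin K → Bool) → ℝ := fun α => ∫ ω, H ω α ∂(P α) with hRdef
  -- Step B : per-α lower bound
  have hRlb : ∀ α, (γ/4) * ∑ j, t α j ≤ R α := by
    intro α
    haveI := hPprob α
    have hHint : Integrable (fun ω => H ω α) (P α) :=
      ⟨(hHmeas α).aestronglyMeasurable, HasFiniteIntegral.of_bounded (C := 2)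
        (Filter.Eventually.of_forall fun ω => by
          rw [Real.norm_eq_abs, abs_of_nonneg (hH0 ω α)]; exact hH2 ω α)⟩
    have hcnt_eq : ∀ ω : Fin n → EuclideanSpace ℝ (Fin d), ((Finset.univ.filter fun i => sel ω i ≠ α i).card : ℝ)
        = ∑ j, Set.indicator (S α j) (fun _ => (1:ℝ)) ω := by
      intro ω
      rw [Finset.card_filter]
      push_cast
      refine Finset.sum_congr rfl fun j _ => ?_
      simp only [hSdef, Set.indicator_apply, Set.mem_setOf_eq]
    have hind_int : ∀ j, Integrable (Set.indicator (S α j) fun _ => (1:ℝ)) (P α) := fun j =>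
      (integrable_indicator_iff (hSmeas α j)).mpr
        (integrableOn_const (measure_ne_top _ _))
    have hcnt_int : Integrable
        (fun ω => ((Finset.univ.filter fun i => sel ω i ≠ α i).card : ℝ)) (P α) := by
      refine (integrable_finset_sum _ fun j _ => hind_int j).congr
        (Filter.Eventually.of_forall fun ω => (hcnt_eq ω).symm)
    have hmono := integral_mono (hcnt_int.const_mul (γ/4)) hHint
      (fun ω => by
        have h := htri ω α
        have := hH0 ω α
        linarith)
    have hcomp : ∫ ω, (γ/4) * ((Finset.univ.filter fun i => sel ω i ≠ α i).card : ℝ) ∂(P α)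
        = (γ/4) * ∑ j, t α j := by
      rw [MeasureTheory.integral_const_mul]
      congr 1
      rw [integral_congr_ae (Filter.Eventually.of_forall fun ω => hcnt_eq ω),
        integral_finset_sum _ (fun j _ => hind_int j)]
      refine Finset.sum_congr rfl fun j _ => ?_
      rw [integral_indicator_const (1:ℝ) (hSmeas α j), smul_eq_mul, mul_one]
      rfl
    rw [hRdef]
    rw [hcomp] at hmono
    exact hmono
  -- Step C : pairing
  set flipα : Fin K → (Fin K → Bool) → (Fin K → Bool) := fun j α => Function.update α j (!(α j)) with hflipdef
  have hflip_inv : ∀ j, Function.Involutive (flipα j) := by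
    intro j α
    funext i
    by_cases h : i = j
    · subst h
      simp [hflipdef, Function.update_self]
    · simp [hflipdef, Function.update_of_ne h]
  have hcard1 : ∀ j (α : Fin K → Bool), (Finset.univ.filter fun i => α i ≠ flipα j α i).card = 1 := by
    intro j α
    have : (Finset.univ.filter fun i => α i ≠ flipα j α i) = {j} := by
      ext i
      simp only [Finset.mem_filter, Finset.mem_univ, true_and, Finset.mem_singleton]
      constructor
      · intro h
        by_contra hij
        exact h (by simp [hflipdef, Function.update_of_ne hij])
      · intro h
        subst h
        simp only [hflipdef, Function.update_self]
        exact (Bool.not_ne_self (α i)).symm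
    rw [this, Finset.card_singleton]
  have hSflip : ∀ j (α : Fin K → Bool), S (flipα j α) j = (S α j)ᶜ := by
    intro j α
    ext ω
    simp only [hSdef, Set.mem_setOf_eq, Set.mem_compl_iff]
    have : flipα j α j = !(α j) := by simp [hflipdef, Function.update_self]
    rw [this]
    cases h1 : sel ω j <;> cases h2 : α j <;> simp
  have hpair : ∀ j (α : Fin K → Bool), 1 - Real.sqrt C ≤ t α j + t (flipα j α) j := by
    intro j α
    have hkt := key_testing hn (hmeas α) (hmeas (flipα j α)) (hnonneg α) (hnonneg _)
      (hfint α) (hfint _) (hint α) (hint _) hC0 hC1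
      (hclose α (flipα j α) (hcard1 j α)) (hSmeas α j)
    rw [htdef]
    simp only [hPdef]
    rw [hSflip j α]
    exact hkt
  have hcardA : (Fintype.card (Fin K → Bool) : ℝ) = 2 ^ K := by
    simp [Fintype.card_fun]
  have hsumj : ∀ j, (2 ^ K : ℝ) * (1 - Real.sqrt C) ≤ 2 * ∑ α : Fin K → Bool, t α j := by
    intro j
    have h1 : ∑ α : Fin K → Bool, t (flipα j α) j = ∑ α : Fin K → Bool, t α j :=
      Fintype.sum_bijective (flipα j) (hflip_inv j).bijective _ _ (fun α => rfl)
    have h2 : ∑ _α : Fin K → Bool, (1 - Real.sqrt C) ≤ ∑ α : Fin K → Bool, (t α j + t (flipα j α) j) :=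
      Finset.sum_le_sum fun α _ => hpair j α
    rw [Finset.sum_add_distrib, h1, Finset.sum_const, nsmul_eq_mul, Finset.card_univ] at h2
    rw [← hcardA]
    linarith
  -- final assembly
  have hne : (Finset.univ : Finset (Fin K → Bool)).Nonempty := ⟨fun _ => false, Finset.mem_univ _⟩
  obtain ⟨αs, -, hmax⟩ := Finset.univ.exists_max_image R hne
  have hgoal : (⨆ α : Fin K → Bool, ∫ ω, (∫ x, (Real.sqrt (est ω x) - Real.sqrt (f α x)) ^ 2)
      ∂(Measure.pi fun _ : Fin n =>
        volume.withDensity fun x => ENNReal.ofReal (f α x))) = ⨆ α, R α := rfl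
  rw [hgoal]
  have hsup : R αs ≤ ⨆ α, R α := le_ciSup (Set.Finite.bddAbove (Set.finite_range R)) αs
  refine le_trans ?_ hsup
  -- sum bounds
  have hsum_le : ∑ α : Fin K → Bool, R α ≤ (2 ^ K : ℝ) * R αs := by
    have := Finset.sum_le_card_nsmul Finset.univ R (R αs)
      (fun b _ => hmax b (Finset.mem_univ b))
    rw [nsmul_eq_mul] at this
    rw [← hcardA]
    simpa using this
  have hsqrtC1 : Real.sqrt C ≤ 1 := by
    have : Real.sqrt C < Real.sqrt 1 := Real.sqrt_lt_sqrt hC0.le hC1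
    rw [Real.sqrt_one] at this
    linarith
  have hsum_ge : (γ/4) * ((K : ℝ) * ((2 ^ K : ℝ) * (1 - Real.sqrt C) / 2)) ≤ ∑ α : Fin K → Bool, R α := by
    have c3 : ∑ α : Fin K → Bool, (γ/4) * ∑ j, t α j ≤ ∑ α : Fin K → Bool, R α :=
      Finset.sum_le_sum fun α _ => hRlb α
    rw [← Finset.mul_sum] at c3
    have c1 : ∑ _j : Fin K, ((2 ^ K : ℝ) * (1 - Real.sqrt C) / 2) ≤ ∑ j, ∑ α : Fin K → Bool, t α j := by
      refine Finset.sum_le_sum fun j _ => ?_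
      linarith [hsumj j]
    rw [Finset.sum_const, nsmul_eq_mul, Finset.card_univ, Fintype.card_fin] at c1
    have c2 : ∑ α : Fin K → Bool, ∑ j, t α j = ∑ j, ∑ α : Fin K → Bool, t α j := Finset.sum_comm
    have c4 : (γ/4) * ((K : ℝ) * ((2 ^ K : ℝ) * (1 - Real.sqrt C) / 2))
        ≤ (γ/4) * ∑ α : Fin K → Bool, ∑ j, t α j := by
      rw [c2]
      exact mul_le_mul_of_nonneg_left c1 (by linarith)
    exact c4.trans c3
  have h2K : (0:ℝ) < 2 ^ K := by positivity
  have key : (2 ^ K : ℝ) * ((K : ℝ) / 8 * (1 - Real.sqrt C) * γ) ≤ (2 ^ K : ℝ) * R αs := by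
    calc (2 ^ K : ℝ) * ((K : ℝ) / 8 * (1 - Real.sqrt C) * γ)
        = (γ/4) * ((K : ℝ) * ((2 ^ K : ℝ) * (1 - Real.sqrt C) / 2)) := by ring
      _ ≤ ∑ α : Fin K → Bool, R α := hsum_ge
      _ ≤ (2 ^ K : ℝ) * R αs := hsum_le
  exact le_of_mul_le_mul_left key h2K
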